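/- arXiv:0904.2486 — 3 statements merged into one kernel-verified Lean document; each statement's English description precedes it below -/
import Mathlib

section
/- Let A and B be categories with pullbacks, F, G, H : A → B pullback-preserving functors, and t : F ⟹ H, u : G ⟹ H cartesian natural transformations. Then the pointwise pullback functor P of t and u preserves pullbacks. -/
open CategoryTheory CategoryTheory.Limits

universe w₁ w₂ v₁ v₂ v₃ u₁ u₂ u₃

/-- A functor preserves pullbacks if it sends pullback squares to pullback squares. -/
def PreservesPB {A : Type u₁} {B : Type u₂} [Category.{v₁} A] [Category.{v₂} B]
    (F : A ⥤ B) : Prop :=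
  ∀ {W X Y Z : A} (fst : W ⟶ X) (snd : W ⟶ Y) (f : X ⟶ Z) (g : Y ⟶ Z),
    IsPullback fst snd f g → IsPullback (F.map fst) (F.map snd) (F.map f) (F.map g)

/-- A natural transformation is cartesian if all its naturality squares are pullbacks. -/
def Cartesian {A : Type u₁} {B : Type u₂} [Category.{v₁} A] [Category.{v₂} B]
    {F G : A ⥤ B} (r : F ⟶ G) : Prop :=
  ∀ {a b : A} (α : a ⟶ b), IsPullback (F.map α) (r.app a) (r.app b) (G.map α)

/-- The pointwise pullback of cartesian natural transformations between
pullback-preserving functors preserves pullbacks. -/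
theorem stmt_6 {A : Type u₁} {B : Type u₂} [Category.{v₁} A] [Category.{v₂} B]
    [HasPullbacks A] [HasPullbacks B] {F G H P : A ⥤ B}
    (hF : PreservesPB F) (hG : PreservesPB G) (hH : PreservesPB H)
    (t : F ⟶ H) (u : G ⟶ H) (ht : Cartesian t) (hu : Cartesian u)
    (r : P ⟶ F) (s : P ⟶ G)
    (hpt : ∀ a : A, IsPullback (r.app a) (s.app a) (t.app a) (u.app a)) :
    PreservesPB P := by
  -- First, `r` is cartesian.
  have cartr : Cartesian r := by
    intro a b α
    -- Big rectangle: paste `hpt a` on top of `(hu α).flip`.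
    have W : IsPullback (r.app a) (s.app a ≫ G.map α) (t.app a ≫ H.map α) (u.app b) :=
      (hpt a).paste_vert (hu α).flip
    rw [← s.naturality, ← t.naturality] at W
    -- Cancel the bottom square `hpt b`.
    exact (W.of_bot (r.naturality α).symm (hpt b)).flip
  intro W X Y Z fst snd f g hsq
  -- Composite rectangle: `(cartr snd).flip` above `hF _ _ _ _ hsq` pasted horizontally.
  have C : IsPullback (r.app W ≫ F.map fst) (P.map snd) (F.map f)
      (r.app Y ≫ F.map g) := (cartr snd).flip.paste_horiz (hF fst snd f g hsq)
  rw [← r.naturality, ← r.naturality] at C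
  -- Cancel the right square `(cartr f).flip`.
  exact C.of_right (by rw [← P.map_comp, ← P.map_comp, hsq.w]) (cartr f).flip
end

section
/- Let A, B be categories with pullbacks. The category whose objects are pullback-preserving functors A → B and whose morphisms are cartesian natural transformations has pullbacks, computed pointwise in B. -/
open CategoryTheory CategoryTheory.Limits

universe w₁ w₂ v₁ v₂ v₃ u₁ u₂ u₃

/-- The category of pullback-preserving functors `A ⥤ B` and cartesian natural
transformations. -/
structure PBFunctor (A : Type u₁) (B : Type u₂) [Category.{v₁} A] [Category.{v₂} B] where
  obj : A ⥤ B
  preserves : PreservesPB obj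

instance PBFunctor.category {A : Type u₁} {B : Type u₂} [Category.{v₁} A] [Category.{v₂} B] :
    Category (PBFunctor A B) where
  Hom F G := { r : F.obj ⟶ G.obj // Cartesian r }
  id F := ⟨𝟙 F.obj, fun α => by
    simp only [NatTrans.id_app]
    exact IsPullback.of_vert_isIso ⟨by simp⟩⟩
  comp {F G H} r s := ⟨r.1 ≫ s.1, fun α => by
    simpa using (r.2 α).paste_vert (s.2 α)⟩
  id_comp f := by apply Subtype.ext; simp
  comp_id f := by apply Subtype.ext; simp
  assoc f g h := by apply Subtype.ext; simp

@[simp] lemma PBFunctor.id_val {A : Type u₁} {B : Type u₂} [Category.{v₁} A]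
    [Category.{v₂} B] (F : PBFunctor A B) : (𝟙 F : F ⟶ F).1 = 𝟙 F.obj := rfl

@[simp] lemma PBFunctor.comp_val {A : Type u₁} {B : Type u₂} [Category.{v₁} A]
    [Category.{v₂} B] {F G H : PBFunctor A B} (r : F ⟶ G) (s : G ⟶ H) :
    (r ≫ s : F ⟶ H).1 = r.1 ≫ s.1 := rfl

namespace PBAux

variable {A : Type u₁} {B : Type u₂} [Category.{v₁} A] [Category.{v₂} B] [HasPullbacks B]

variable {F G H : A ⥤ B} (t : F ⟶ H) (u : G ⟶ H)

@[simp] lemma map_fst_aux {W X Y Z S T : B} (f₁ : W ⟶ S) (f₂ : X ⟶ S) [HasPullback f₁ f₂]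
    (g₁ : Y ⟶ T) (g₂ : Z ⟶ T) [HasPullback g₁ g₂] (i₁ : W ⟶ Y) (i₂ : X ⟶ Z) (i₃ : S ⟶ T)
    (eq₁ : f₁ ≫ i₃ = i₁ ≫ g₁) (eq₂ : f₂ ≫ i₃ = i₂ ≫ g₂) :
    pullback.map f₁ f₂ g₁ g₂ i₁ i₂ i₃ eq₁ eq₂ ≫ pullback.fst g₁ g₂ = pullback.fst f₁ f₂ ≫ i₁ :=
  pullback.lift_fst _ _ _

@[simp] lemma map_snd_aux {W X Y Z S T : B} (f₁ : W ⟶ S) (f₂ : X ⟶ S) [HasPullback f₁ f₂]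
    (g₁ : Y ⟶ T) (g₂ : Z ⟶ T) [HasPullback g₁ g₂] (i₁ : W ⟶ Y) (i₂ : X ⟶ Z) (i₃ : S ⟶ T)
    (eq₁ : f₁ ≫ i₃ = i₁ ≫ g₁) (eq₂ : f₂ ≫ i₃ = i₂ ≫ g₂) :
    pullback.map f₁ f₂ g₁ g₂ i₁ i₂ i₃ eq₁ eq₂ ≫ pullback.snd g₁ g₂ = pullback.snd f₁ f₂ ≫ i₂ :=
  pullback.lift_snd _ _ _

@[simp] lemma map_fst_assoc_aux {W X Y Z S T : B} (f₁ : W ⟶ S) (f₂ : X ⟶ S) [HasPullback f₁ f₂]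
    (g₁ : Y ⟶ T) (g₂ : Z ⟶ T) [HasPullback g₁ g₂] (i₁ : W ⟶ Y) (i₂ : X ⟶ Z) (i₃ : S ⟶ T)
    (eq₁ : f₁ ≫ i₃ = i₁ ≫ g₁) (eq₂ : f₂ ≫ i₃ = i₂ ≫ g₂) {V : B} (h : Y ⟶ V) :
    pullback.map f₁ f₂ g₁ g₂ i₁ i₂ i₃ eq₁ eq₂ ≫ pullback.fst g₁ g₂ ≫ h =
      pullback.fst f₁ f₂ ≫ i₁ ≫ h := by
  rw [← Category.assoc, map_fst_aux, Category.assoc]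

@[simp] lemma map_snd_assoc_aux {W X Y Z S T : B} (f₁ : W ⟶ S) (f₂ : X ⟶ S) [HasPullback f₁ f₂]
    (g₁ : Y ⟶ T) (g₂ : Z ⟶ T) [HasPullback g₁ g₂] (i₁ : W ⟶ Y) (i₂ : X ⟶ Z) (i₃ : S ⟶ T)
    (eq₁ : f₁ ≫ i₃ = i₁ ≫ g₁) (eq₂ : f₂ ≫ i₃ = i₂ ≫ g₂) {V : B} (h : Z ⟶ V) :
    pullback.map f₁ f₂ g₁ g₂ i₁ i₂ i₃ eq₁ eq₂ ≫ pullback.snd g₁ g₂ ≫ h =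
      pullback.snd f₁ f₂ ≫ i₂ ≫ h := by
  rw [← Category.assoc, map_snd_aux, Category.assoc]

/-- The pointwise pullback functor. -/
@[simps]
noncomputable def P : A ⥤ B where
  obj a := pullback (t.app a) (u.app a)
  map {a b} α := pullback.map _ _ _ _ (F.map α) (G.map α) (H.map α)
    (t.naturality α).symm (u.naturality α).symm
  map_id a := by apply pullback.hom_ext <;> simp
  map_comp f g := by apply pullback.hom_ext <;> simp

attribute [reducible] P

/-- First projection. -/
@[simps]
noncomputable def rNat : P t u ⟶ F where
  app a := pullback.fst _ _
  naturality a b α := by simp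

/-- Second projection. -/
@[simps]
noncomputable def sNat : P t u ⟶ G where
  app a := pullback.snd _ _
  naturality a b α := by simp

lemma pointwise (a : A) :
    IsPullback ((rNat t u).app a) ((sNat t u).app a) (t.app a) (u.app a) :=
  IsPullback.of_hasPullback _ _

lemma rNat_cartesian (hu : Cartesian u) : Cartesian (rNat t u) := by
  intro a b α
  have h1 := (pointwise t u a).flip.paste_horiz (hu α)
  rw [← (sNat t u).naturality α, ← t.naturality α] at h1
  exact h1.of_right ((rNat t u).naturality α) (pointwise t u b).flip

lemma sNat_cartesian (ht : Cartesian t) : Cartesian (sNat t u) := by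
  intro a b α
  have h1 := (pointwise t u a).paste_horiz (ht α)
  rw [← (rNat t u).naturality α, ← u.naturality α] at h1
  exact h1.of_right ((sNat t u).naturality α) (pointwise t u b)

lemma P_preserves (hF : PreservesPB F) (hG : PreservesPB G) (hH : PreservesPB H) :
    PreservesPB (P t u) := by
  intro W X Y Z fst snd f g hsq
  have hFs := hF fst snd f g hsq
  have hGs := hG fst snd f g hsq
  have hHs := hH fst snd f g hsq
  have w : (P t u).map fst ≫ (P t u).map f = (P t u).map snd ≫ (P t u).map g := by
    rw [← Functor.map_comp, ← Functor.map_comp, hsq.w]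
  have wF : ∀ (s : PullbackCone ((P t u).map f) ((P t u).map g)),
      (s.fst ≫ (rNat t u).app X) ≫ F.map f = (s.snd ≫ (rNat t u).app Y) ≫ F.map g := by
    intro s
    rw [Category.assoc, Category.assoc, ← (rNat t u).naturality f, ← (rNat t u).naturality g,
      ← Category.assoc, s.condition, Category.assoc]
  have wG : ∀ (s : PullbackCone ((P t u).map f) ((P t u).map g)),
      (s.fst ≫ (sNat t u).app X) ≫ G.map f = (s.snd ≫ (sNat t u).app Y) ≫ G.map g := by
    intro s
    rw [Category.assoc, Category.assoc, ← (sNat t u).naturality f, ← (sNat t u).naturality g,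
      ← Category.assoc, s.condition, Category.assoc]
  have wtu : ∀ (s : PullbackCone ((P t u).map f) ((P t u).map g)),
      hFs.lift (s.fst ≫ (rNat t u).app X) (s.snd ≫ (rNat t u).app Y) (wF s) ≫ t.app W =
      hGs.lift (s.fst ≫ (sNat t u).app X) (s.snd ≫ (sNat t u).app Y) (wG s) ≫ u.app W := by
    intro s
    apply hHs.hom_ext
    · rw [Category.assoc, Category.assoc, ← t.naturality fst, ← u.naturality fst,
        ← Category.assoc, hFs.lift_fst, ← Category.assoc, hGs.lift_fst]
      simp only [Category.assoc, PBAux.rNat_app, PBAux.sNat_app, pullback.condition]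
    · rw [Category.assoc, Category.assoc, ← t.naturality snd, ← u.naturality snd,
        ← Category.assoc, hFs.lift_snd, ← Category.assoc, hGs.lift_snd]
      simp only [Category.assoc, PBAux.rNat_app, PBAux.sNat_app, pullback.condition]
  refine IsPullback.of_isLimit' ⟨w⟩ (PullbackCone.IsLimit.mk _
    (fun s => pullback.lift
      (hFs.lift (s.fst ≫ (rNat t u).app X) (s.snd ≫ (rNat t u).app Y) (wF s))
      (hGs.lift (s.fst ≫ (sNat t u).app X) (s.snd ≫ (sNat t u).app Y) (wG s)) (wtu s))
    (fun s => ?_) (fun s => ?_) (fun s m h1 h2 => ?_))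
  · apply pullback.hom_ext
    · have : (P t u).map fst ≫ pullback.fst _ _ = pullback.fst _ _ ≫ F.map fst :=
        (rNat t u).naturality fst
      rw [Category.assoc, this, ← Category.assoc, pullback.lift_fst, hFs.lift_fst]; simp
    · have : (P t u).map fst ≫ pullback.snd _ _ = pullback.snd _ _ ≫ G.map fst :=
        (sNat t u).naturality fst
      rw [Category.assoc, this, ← Category.assoc, pullback.lift_snd, hGs.lift_fst]; simp
  · apply pullback.hom_ext
    · have : (P t u).map snd ≫ pullback.fst _ _ = pullback.fst _ _ ≫ F.map snd :=
        (rNat t u).naturality snd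
      rw [Category.assoc, this, ← Category.assoc, pullback.lift_fst, hFs.lift_snd]; simp
    · have : (P t u).map snd ≫ pullback.snd _ _ = pullback.snd _ _ ≫ G.map snd :=
        (sNat t u).naturality snd
      rw [Category.assoc, this, ← Category.assoc, pullback.lift_snd, hGs.lift_snd]; simp
  · have nrf : pullback.fst (t.app W) (u.app W) ≫ F.map fst =
        (P t u).map fst ≫ pullback.fst (t.app X) (u.app X) := ((rNat t u).naturality fst).symm
    have nrs : pullback.fst (t.app W) (u.app W) ≫ F.map snd =
        (P t u).map snd ≫ pullback.fst (t.app Y) (u.app Y) := ((rNat t u).naturality snd).symm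
    have nsf : pullback.snd (t.app W) (u.app W) ≫ G.map fst =
        (P t u).map fst ≫ pullback.snd (t.app X) (u.app X) := ((sNat t u).naturality fst).symm
    have nss : pullback.snd (t.app W) (u.app W) ≫ G.map snd =
        (P t u).map snd ≫ pullback.snd (t.app Y) (u.app Y) := ((sNat t u).naturality snd).symm
    apply pullback.hom_ext
    · rw [pullback.lift_fst]
      apply hFs.hom_ext
      · rw [hFs.lift_fst, Category.assoc, nrf, ← Category.assoc, h1]; simp
      · rw [hFs.lift_snd, Category.assoc, nrs, ← Category.assoc, h2]; simp
    · rw [pullback.lift_snd]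
      apply hGs.hom_ext
      · rw [hGs.lift_fst, Category.assoc, nsf, ← Category.assoc, h1]; simp
      · rw [hGs.lift_snd, Category.assoc, nss, ← Category.assoc, h2]; simp

variable {Fp Gp Hp : PBFunctor A B} (tc : Fp ⟶ Hp) (uc : Gp ⟶ Hp)

/-- The pointwise pullback as a `PBFunctor`. -/
noncomputable def Ppb : PBFunctor A B :=
  ⟨P tc.1 uc.1, P_preserves tc.1 uc.1 Fp.preserves Gp.preserves Hp.preserves⟩

/-- First projection, as a cartesian transformation. -/
noncomputable def rpb : Ppb tc uc ⟶ Fp := ⟨rNat tc.1 uc.1, rNat_cartesian tc.1 uc.1 uc.2⟩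

/-- Second projection, as a cartesian transformation. -/
noncomputable def spb : Ppb tc uc ⟶ Gp := ⟨sNat tc.1 uc.1, sNat_cartesian tc.1 uc.1 tc.2⟩

lemma comm : rpb tc uc ≫ tc = spb tc uc ≫ uc := by
  apply Subtype.ext
  ext a
  exact pullback.condition

/-- The lift of a cone, as a natural transformation. -/
noncomputable def liftNat (Q : A ⥤ B) (aN : Q ⟶ Fp.obj) (bN : Q ⟶ Gp.obj)
    (hw : aN ≫ tc.1 = bN ≫ uc.1) : Q ⟶ P tc.1 uc.1 where
  app a := pullback.lift (aN.app a) (bN.app a) (NatTrans.congr_app hw a)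
  naturality a b α := by
    apply pullback.hom_ext
    · simp; erw [pullback.lift_fst, pullback.lift_fst_assoc]; exact aN.naturality α
    · simp; erw [pullback.lift_snd, pullback.lift_snd_assoc]; exact bN.naturality α

lemma liftNat_cartesian (Q : A ⥤ B) (aN : Q ⟶ Fp.obj) (bN : Q ⟶ Gp.obj)
    (hw : aN ≫ tc.1 = bN ≫ uc.1) (ha : Cartesian aN) :
    Cartesian (liftNat tc uc Q aN bN hw) := by
  intro a b α
  have h := ha α
  have ea : ∀ c, aN.app c =
      (liftNat tc uc Q aN bN hw).app c ≫ (rNat tc.1 uc.1).app c := by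
    intro c; simp [liftNat]; exact (pullback.lift_fst _ _ _).symm
  rw [ea a, ea b] at h
  exact h.of_bot ((liftNat tc uc Q aN bN hw).naturality α)
    (rNat_cartesian tc.1 uc.1 uc.2 α)

/-- The pointwise pullback is a pullback in `PBFunctor A B`. -/
noncomputable def isLimitPpb :
    IsLimit (PullbackCone.mk (rpb tc uc) (spb tc uc) (comm tc uc)) := by
  refine PullbackCone.IsLimit.mk _
    (fun s => ⟨liftNat tc uc s.pt.obj s.fst.1 s.snd.1 (congrArg Subtype.val s.condition),
      liftNat_cartesian tc uc s.pt.obj s.fst.1 s.snd.1 (congrArg Subtype.val s.condition)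
        s.fst.2⟩)
    (fun s => ?_) (fun s => ?_) (fun s m h1 h2 => ?_)
  · apply Subtype.ext; ext a; simp [rpb, liftNat]; exact pullback.lift_fst _ _ _
  · apply Subtype.ext; ext a; simp [spb, liftNat]; exact pullback.lift_snd _ _ _
  · apply Subtype.ext
    ext a
    apply pullback.hom_ext
    · have := congrArg (fun n : s.pt ⟶ Fp => n.1.app a) h1
      exact this.trans (pullback.lift_fst _ _ _).symm
    · have := congrArg (fun n : s.pt ⟶ Gp => n.1.app a) h2
      exact this.trans (pullback.lift_snd _ _ _).symm

lemma isPB : IsPullback (rpb tc uc) (spb tc uc) tc uc :=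
  IsPullback.of_isLimit (isLimitPpb tc uc)

end PBAux

/-- `[A,B]_pb` has pullbacks, computed pointwise in `B`. -/
theorem stmt_8 {A : Type u₁} {B : Type u₂} [Category.{v₁} A] [Category.{v₂} B]
    [HasPullbacks A] [HasPullbacks B] :
    HasPullbacks (PBFunctor A B) ∧
      ∀ {F G H : PBFunctor A B} (t : F ⟶ H) (u : G ⟶ H),
        ∃ (P : PBFunctor A B) (r : P ⟶ F) (s : P ⟶ G),
          (∀ a : A, IsPullback (r.1.app a) (s.1.app a) (t.1.app a) (u.1.app a)) ∧
          IsPullback r s t u := by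
  constructor
  · haveI : ∀ {X Y Z : PBFunctor A B} {f : X ⟶ Z} {g : Y ⟶ Z}, HasLimit (cospan f g) :=
      fun {X Y Z f g} => HasLimit.mk ⟨_, PBAux.isLimitPpb f g⟩
    exact hasPullbacks_of_hasLimit_cospan _
  · intro F G H t u
    refine ⟨PBAux.Ppb t u, PBAux.rpb t u, PBAux.spb t u, fun a => ?_, PBAux.isPB t u⟩
    exact PBAux.pointwise t.1 u.1 a
end

section
/- Let A, B be categories with pullbacks. The evaluation functor ev : [A,B]_pb × A → B, sending (F, a) to F a, preserves pullbacks, where [A,B]_pb is the category of pullback-preserving functors A → B and cartesian natural transformations. -/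
open CategoryTheory CategoryTheory.Limits

universe w₁ w₂ v₁ v₂ v₃ u₁ u₂ u₃

/-- The evaluation functor `[A,B]_pb × A ⥤ B`, sending `(F, a)` to `F a`. -/
def evPB (A : Type u₁) (B : Type u₂) [Category.{v₁} A] [Category.{v₂} B] :
    (PBFunctor A B) × A ⥤ B where
  obj p := p.1.obj.obj p.2
  map {p q} f := f.1.1.app p.2 ≫ q.1.obj.map f.2
  map_id p := by simp
  map_comp {p q m} f g := by
    simp [NatTrans.naturality_assoc]


section EvAux

variable {B : Type u₂} [Category.{v₂} B]

/-- The composite of a pointwise-pullback square with a cartesian naturality square. -/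
lemma EvAux.bigSq {Qa Qb Fa Fb Ga Gb Ha Hb : B}
    {p1a : Qa ⟶ Fa} {p2a : Qa ⟶ Ga} {ta : Fa ⟶ Ha} {ua : Ga ⟶ Ha}
    {p1b : Qb ⟶ Fb} {p2b : Qb ⟶ Gb} {tb : Fb ⟶ Hb} {ub : Gb ⟶ Hb}
    {Fφ : Fa ⟶ Fb} {Gφ : Ga ⟶ Gb} {Hφ : Ha ⟶ Hb} {Qφ : Qa ⟶ Qb}
    (S1 : IsPullback p1a p2a ta ua) (S2 : IsPullback p1b p2b tb ub)
    (T : IsPullback Fφ ta tb Hφ) (U : IsPullback Gφ ua ub Hφ)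
    (h1 : Qφ ≫ p1b = p1a ≫ Fφ) (h2 : Qφ ≫ p2b = p2a ≫ Gφ) :
    IsPullback Qφ (p1a ≫ ta) (p1b ≫ tb) Hφ := by
  have comm : Qφ ≫ p1b ≫ tb = (p1a ≫ ta) ≫ Hφ := by
    rw [← Category.assoc, h1, Category.assoc, Category.assoc, T.w]
  refine IsPullback.of_isLimit' ⟨comm⟩ (PullbackCone.IsLimit.mk comm
    (fun s => S1.lift (T.lift (s.fst ≫ p1b) s.snd (by rw [Category.assoc, s.condition]))
      (U.lift (s.fst ≫ p2b) s.snd (by rw [Category.assoc, ← S2.w, s.condition]))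
      (by rw [T.lift_snd, U.lift_snd])) (fun s => ?_) (fun s => ?_) (fun s m hm1 hm2 => ?_))
  · apply S2.hom_ext
    · rw [Category.assoc, h1, ← Category.assoc, S1.lift_fst, T.lift_fst]
    · rw [Category.assoc, h2, ← Category.assoc, S1.lift_snd, U.lift_fst]
  · rw [← Category.assoc, S1.lift_fst, T.lift_snd]
  · apply S1.hom_ext
    · rw [S1.lift_fst]
      apply T.hom_ext
      · rw [Category.assoc, ← h1, ← Category.assoc, hm1, T.lift_fst]
      · rw [T.lift_snd, Category.assoc, hm2]
    · rw [S1.lift_snd]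
      apply U.hom_ext
      · rw [Category.assoc, ← h2, ← Category.assoc, hm1, U.lift_fst]
      · rw [U.lift_snd, Category.assoc, ← S1.w, hm2]

/-- The projection from a pointwise pullback of cartesian transformations is cartesian. -/
lemma EvAux.projCart {Qa Qb Fa Fb Ga Gb Ha Hb : B}
    {p1a : Qa ⟶ Fa} {p2a : Qa ⟶ Ga} {ta : Fa ⟶ Ha} {ua : Ga ⟶ Ha}
    {p1b : Qb ⟶ Fb} {p2b : Qb ⟶ Gb} {tb : Fb ⟶ Hb} {ub : Gb ⟶ Hb}
    {Fφ : Fa ⟶ Fb} {Gφ : Ga ⟶ Gb} {Hφ : Ha ⟶ Hb} {Qφ : Qa ⟶ Qb}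
    (S1 : IsPullback p1a p2a ta ua) (S2 : IsPullback p1b p2b tb ub)
    (T : IsPullback Fφ ta tb Hφ) (U : IsPullback Gφ ua ub Hφ)
    (h1 : Qφ ≫ p1b = p1a ≫ Fφ) (h2 : Qφ ≫ p2b = p2a ≫ Gφ) :
    IsPullback Qφ p1a p1b Fφ :=
  IsPullback.of_bot (EvAux.bigSq S1 S2 T U h1 h2) h1 T

end EvAux

section EvAux2

variable {A : Type u₁} {B : Type u₂} [Category.{v₁} A] [Category.{v₂} B] [HasPullbacks B]

/-- The pointwise pullback of two natural transformations into a common target. -/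
@[reducible] noncomputable def EvAux.pbQ {F G H : A ⥤ B} (t : F ⟶ H) (u : G ⟶ H) : A ⥤ B where
  obj a := pullback (t.app a) (u.app a)
  map {a b} φ := pullback.lift (pullback.fst _ _ ≫ F.map φ) (pullback.snd _ _ ≫ G.map φ)
    (by rw [Category.assoc, NatTrans.naturality, Category.assoc, NatTrans.naturality,
      ← Category.assoc, pullback.condition, Category.assoc])
  map_id a := by apply pullback.hom_ext <;> simp
  map_comp φ ψ := by
    apply pullback.hom_ext <;> simp only [Category.assoc]
    · erw [pullback.lift_fst, pullback.lift_fst, ← Category.assoc, pullback.lift_fst]; simp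
    · erw [pullback.lift_snd, pullback.lift_snd, ← Category.assoc, pullback.lift_snd]; simp

@[simp] lemma EvAux.pbQ_map_fst {F G H : A ⥤ B} (t : F ⟶ H) (u : G ⟶ H) {a b : A} (φ : a ⟶ b) :
    (EvAux.pbQ t u).map φ ≫ pullback.fst (t.app b) (u.app b) =
      pullback.fst (t.app a) (u.app a) ≫ F.map φ :=
  pullback.lift_fst _ _ _

@[simp] lemma EvAux.pbQ_map_snd {F G H : A ⥤ B} (t : F ⟶ H) (u : G ⟶ H) {a b : A} (φ : a ⟶ b) :
    (EvAux.pbQ t u).map φ ≫ pullback.snd (t.app b) (u.app b) =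
      pullback.snd (t.app a) (u.app a) ≫ G.map φ :=
  pullback.lift_snd _ _ _

/-- First projection from the pointwise pullback. -/
noncomputable def EvAux.pbQfst {F G H : A ⥤ B} (t : F ⟶ H) (u : G ⟶ H) : EvAux.pbQ t u ⟶ F where
  app a := pullback.fst _ _
  naturality a b φ := EvAux.pbQ_map_fst t u φ

/-- Second projection from the pointwise pullback. -/
noncomputable def EvAux.pbQsnd {F G H : A ⥤ B} (t : F ⟶ H) (u : G ⟶ H) : EvAux.pbQ t u ⟶ G where
  app a := pullback.snd _ _
  naturality a b φ := EvAux.pbQ_map_snd t u φ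

@[simp] lemma EvAux.pbQfst_app {F G H : A ⥤ B} (t : F ⟶ H) (u : G ⟶ H) (a : A) :
    (EvAux.pbQfst t u).app a = pullback.fst (t.app a) (u.app a) := rfl

@[simp] lemma EvAux.pbQsnd_app {F G H : A ⥤ B} (t : F ⟶ H) (u : G ⟶ H) (a : A) :
    (EvAux.pbQsnd t u).app a = pullback.snd (t.app a) (u.app a) := rfl

lemma EvAux.pbQfst_cart {F G H : A ⥤ B} {t : F ⟶ H} {u : G ⟶ H}
    (ht : Cartesian t) (hu : Cartesian u) : Cartesian (EvAux.pbQfst t u) := fun {a b} φ =>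
  EvAux.projCart (IsPullback.of_hasPullback (t.app a) (u.app a))
    (IsPullback.of_hasPullback (t.app b) (u.app b)) (ht φ) (hu φ)
    (EvAux.pbQ_map_fst t u φ) (EvAux.pbQ_map_snd t u φ)

lemma EvAux.pbQsnd_cart {F G H : A ⥤ B} {t : F ⟶ H} {u : G ⟶ H}
    (ht : Cartesian t) (hu : Cartesian u) : Cartesian (EvAux.pbQsnd t u) := fun {a b} φ =>
  EvAux.projCart (IsPullback.of_hasPullback (t.app a) (u.app a)).flip
    (IsPullback.of_hasPullback (t.app b) (u.app b)).flip (hu φ) (ht φ)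
    (EvAux.pbQ_map_snd t u φ) (EvAux.pbQ_map_fst t u φ)

/-- The canonical lift into the pointwise pullback. -/
noncomputable def EvAux.pbQLift {F G H : A ⥤ B} (t : F ⟶ H) (u : G ⟶ H) {T : A ⥤ B}
    (v : T ⟶ F) (w : T ⟶ G) (hc : v ≫ t = w ≫ u) : T ⟶ EvAux.pbQ t u where
  app a := pullback.lift (v.app a) (w.app a) (congr_fun (congrArg NatTrans.app hc) a)
  naturality a b φ := by
    apply pullback.hom_ext <;> simp only [Category.assoc]
    · erw [pullback.lift_fst, pullback.lift_fst, ← Category.assoc, pullback.lift_fst]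
      simp [NatTrans.naturality]
    · erw [pullback.lift_snd, pullback.lift_snd, ← Category.assoc, pullback.lift_snd]
      simp [NatTrans.naturality]

@[simp] lemma EvAux.pbQLift_app_fst {F G H : A ⥤ B} (t : F ⟶ H) (u : G ⟶ H) {T : A ⥤ B}
    (v : T ⟶ F) (w : T ⟶ G) (hc : v ≫ t = w ≫ u) (a : A) :
    (EvAux.pbQLift t u v w hc).app a ≫ pullback.fst (t.app a) (u.app a) = v.app a :=
  pullback.lift_fst _ _ _

@[simp] lemma EvAux.pbQLift_app_snd {F G H : A ⥤ B} (t : F ⟶ H) (u : G ⟶ H) {T : A ⥤ B}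
    (v : T ⟶ F) (w : T ⟶ G) (hc : v ≫ t = w ≫ u) (a : A) :
    (EvAux.pbQLift t u v w hc).app a ≫ pullback.snd (t.app a) (u.app a) = w.app a :=
  pullback.lift_snd _ _ _

lemma EvAux.pbQLift_cart {F G H : A ⥤ B} {t : F ⟶ H} {u : G ⟶ H} {T : A ⥤ B}
    {v : T ⟶ F} {w : T ⟶ G} (hc : v ≫ t = w ≫ u)
    (ht : Cartesian t) (hu : Cartesian u) (hv : Cartesian v) :
    Cartesian (EvAux.pbQLift t u v w hc) := by
  intro a b φ
  refine IsPullback.of_bot ?_ ((EvAux.pbQLift t u v w hc).naturality φ)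
    (EvAux.pbQfst_cart ht hu φ)
  show IsPullback (T.map φ)
    ((EvAux.pbQLift t u v w hc).app a ≫ (EvAux.pbQfst t u).app a)
    ((EvAux.pbQLift t u v w hc).app b ≫ (EvAux.pbQfst t u).app b) (F.map φ)
  rw [EvAux.pbQfst_app, EvAux.pbQfst_app, EvAux.pbQLift_app_fst, EvAux.pbQLift_app_fst]
  exact hv φ

/-- The pointwise pullback of pullback-preserving functors preserves pullbacks. -/
lemma EvAux.pbQ_preserves {F G H : A ⥤ B} {t : F ⟶ H} {u : G ⟶ H}
    (hF : PreservesPB F) (hG : PreservesPB G) (hH : PreservesPB H) :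
    PreservesPB (EvAux.pbQ t u) := by
  intro w x y z α β γ δ hA
  have hFw := hF α β γ δ hA
  have hGw := hG α β γ δ hA
  have hHw := hH α β γ δ hA
  have wcomm : (EvAux.pbQ t u).map α ≫ (EvAux.pbQ t u).map γ =
      (EvAux.pbQ t u).map β ≫ (EvAux.pbQ t u).map δ := by
    rw [← Functor.map_comp, ← Functor.map_comp, hA.w]
  have cF : ∀ s : PullbackCone ((EvAux.pbQ t u).map γ) ((EvAux.pbQ t u).map δ),
      (s.fst ≫ pullback.fst (t.app x) (u.app x)) ≫ F.map γ =
        (s.snd ≫ pullback.fst (t.app y) (u.app y)) ≫ F.map δ := fun s => by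
    rw [Category.assoc, ← EvAux.pbQ_map_fst t u γ, Category.assoc, ← EvAux.pbQ_map_fst t u δ,
      ← Category.assoc, ← Category.assoc, s.condition]
  have cG : ∀ s : PullbackCone ((EvAux.pbQ t u).map γ) ((EvAux.pbQ t u).map δ),
      (s.fst ≫ pullback.snd (t.app x) (u.app x)) ≫ G.map γ =
        (s.snd ≫ pullback.snd (t.app y) (u.app y)) ≫ G.map δ := fun s => by
    rw [Category.assoc, ← EvAux.pbQ_map_snd t u γ, Category.assoc, ← EvAux.pbQ_map_snd t u δ,
      ← Category.assoc, ← Category.assoc, s.condition]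
  have cFG : ∀ s : PullbackCone ((EvAux.pbQ t u).map γ) ((EvAux.pbQ t u).map δ),
      hFw.lift _ _ (cF s) ≫ t.app w = hGw.lift _ _ (cG s) ≫ u.app w := fun s => by
    apply hHw.hom_ext
    · have e1 := hFw.lift_fst _ _ (cF s)
      have e2 := hGw.lift_fst _ _ (cG s)
      rw [Category.assoc, Category.assoc, ← NatTrans.naturality, ← NatTrans.naturality,
        ← Category.assoc, ← Category.assoc, e1, e2, Category.assoc, Category.assoc,
        pullback.condition]
    · have e1 := hFw.lift_snd _ _ (cF s)
      have e2 := hGw.lift_snd _ _ (cG s)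
      rw [Category.assoc, Category.assoc, ← NatTrans.naturality, ← NatTrans.naturality,
        ← Category.assoc, ← Category.assoc, e1, e2, Category.assoc, Category.assoc,
        pullback.condition]
  refine IsPullback.of_isLimit' ⟨wcomm⟩ (PullbackCone.IsLimit.mk wcomm (fun s =>
      pullback.lift (hFw.lift _ _ (cF s)) (hGw.lift _ _ (cG s)) (cFG s))
      (fun s => ?_) (fun s => ?_) (fun s m hm1 hm2 => ?_))
  · apply pullback.hom_ext
    · rw [Category.assoc, EvAux.pbQ_map_fst, ← Category.assoc, pullback.lift_fst, hFw.lift_fst]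
    · rw [Category.assoc, EvAux.pbQ_map_snd, ← Category.assoc, pullback.lift_snd, hGw.lift_fst]
  · apply pullback.hom_ext
    · rw [Category.assoc, EvAux.pbQ_map_fst, ← Category.assoc, pullback.lift_fst, hFw.lift_snd]
    · rw [Category.assoc, EvAux.pbQ_map_snd, ← Category.assoc, pullback.lift_snd, hGw.lift_snd]
  · apply pullback.hom_ext
    · rw [pullback.lift_fst]
      apply hFw.hom_ext
      · rw [hFw.lift_fst, Category.assoc, ← EvAux.pbQ_map_fst t u α, ← Category.assoc, hm1]
      · rw [hFw.lift_snd, Category.assoc, ← EvAux.pbQ_map_fst t u β, ← Category.assoc, hm2]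
    · rw [pullback.lift_snd]
      apply hGw.hom_ext
      · rw [hGw.lift_fst, Category.assoc, ← EvAux.pbQ_map_snd t u α, ← Category.assoc, hm1]
      · rw [hGw.lift_snd, Category.assoc, ← EvAux.pbQ_map_snd t u β, ← Category.assoc, hm2]

end EvAux2

section EvAux3

variable {A : Type u₁} {B : Type u₂} [Category.{v₁} A] [Category.{v₂} B] [HasPullbacks B]

/-- The pointwise pullback as a pullback-preserving functor. -/
@[reducible] noncomputable def EvAux.QP (F G H : PBFunctor A B) (t : F ⟶ H) (u : G ⟶ H) : PBFunctor A B :=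
  ⟨EvAux.pbQ t.1 u.1, EvAux.pbQ_preserves F.preserves G.preserves H.preserves⟩

/-- First projection, as a morphism of `PBFunctor`. -/
noncomputable def EvAux.QPfst (F G H : PBFunctor A B) (t : F ⟶ H) (u : G ⟶ H) :
    EvAux.QP F G H t u ⟶ F := ⟨EvAux.pbQfst t.1 u.1, EvAux.pbQfst_cart t.2 u.2⟩

/-- Second projection, as a morphism of `PBFunctor`. -/
noncomputable def EvAux.QPsnd (F G H : PBFunctor A B) (t : F ⟶ H) (u : G ⟶ H) :
    EvAux.QP F G H t u ⟶ G := ⟨EvAux.pbQsnd t.1 u.1, EvAux.pbQsnd_cart t.2 u.2⟩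

/-- The pointwise pullback is a pullback in `PBFunctor`. -/
lemma EvAux.QP_isPullback (F G H : PBFunctor A B) (t : F ⟶ H) (u : G ⟶ H) :
    IsPullback (EvAux.QPfst F G H t u) (EvAux.QPsnd F G H t u) t u := by
  have wcomm : EvAux.QPfst F G H t u ≫ t = EvAux.QPsnd F G H t u ≫ u := by
    apply Subtype.ext
    simp only [PBFunctor.comp_val]
    ext a
    exact pullback.condition
  have sc : ∀ s : PullbackCone t u, s.fst.1 ≫ t.1 = s.snd.1 ≫ u.1 := fun s => by
    have := congrArg Subtype.val s.condition
    simpa using this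
  refine IsPullback.of_isLimit' ⟨wcomm⟩ (PullbackCone.IsLimit.mk wcomm
    (fun s => ⟨EvAux.pbQLift t.1 u.1 s.fst.1 s.snd.1 (sc s),
      EvAux.pbQLift_cart (sc s) t.2 u.2 s.fst.2⟩) (fun s => ?_) (fun s => ?_)
    (fun s m hm1 hm2 => ?_))
  · apply Subtype.ext
    simp only [PBFunctor.comp_val]
    ext a
    simp [EvAux.QPfst]
  · apply Subtype.ext
    simp only [PBFunctor.comp_val]
    ext a
    simp [EvAux.QPsnd]
  · apply Subtype.ext
    ext a
    · have h1 := congrArg (fun ν => ν.val.app a) hm1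
      simpa [EvAux.QPfst] using h1
    · have h2 := congrArg (fun ν => ν.val.app a) hm2
      simpa [EvAux.QPsnd] using h2

/-- Any pullback square in `PBFunctor` is a pointwise pullback. -/
lemma EvAux.pointwise {P F G H : PBFunctor A B} {r : P ⟶ F} {s : P ⟶ G} {t : F ⟶ H} {u : G ⟶ H}
    (h : IsPullback r s t u) (a : A) :
    IsPullback (r.1.app a) (s.1.app a) (t.1.app a) (u.1.app a) := by
  have hQ := EvAux.QP_isPullback F G H t u
  set e := h.isoIsPullback _ _ hQ with he
  have e1 : e.hom ≫ EvAux.QPfst F G H t u = r := h.isoIsPullback_hom_fst _ _ hQ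
  have e2 : e.hom ≫ EvAux.QPsnd F G H t u = s := h.isoIsPullback_hom_snd _ _ hQ
  have e1a : e.hom.1.app a ≫ pullback.fst (t.1.app a) (u.1.app a) = r.1.app a := by
    have := congrArg (fun ν => ν.val.app a) e1
    simpa [EvAux.QPfst] using this
  have e2a : e.hom.1.app a ≫ pullback.snd (t.1.app a) (u.1.app a) = s.1.app a := by
    have := congrArg (fun ν => ν.val.app a) e2
    simpa [EvAux.QPsnd] using this
  have hia : e.hom.1.app a ≫ e.inv.1.app a = 𝟙 _ := by
    have := congrArg (fun ν => ν.val.app a) e.hom_inv_id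
    simp only [PBFunctor.comp_val, PBFunctor.id_val, NatTrans.comp_app, NatTrans.id_app] at this
    exact this
  have hai : e.inv.1.app a ≫ e.hom.1.app a = 𝟙 _ := by
    have := congrArg (fun ν => ν.val.app a) e.inv_hom_id
    simp only [PBFunctor.comp_val, PBFunctor.id_val, NatTrans.comp_app, NatTrans.id_app] at this
    exact this
  have base := IsPullback.of_hasPullback (t.1.app a) (u.1.app a)
  refine base.of_iso (Iso.symm ⟨e.hom.1.app a, e.inv.1.app a, hia, hai⟩)
    (Iso.refl _) (Iso.refl _) (Iso.refl _) ?_ ?_ (by simp) (by simp)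
  · show pullback.fst (t.1.app a) (u.1.app a) ≫ 𝟙 _ = e.inv.1.app a ≫ r.1.app a
    rw [Category.comp_id, ← e1a, ← Category.assoc, hai, Category.id_comp]
  · show pullback.snd (t.1.app a) (u.1.app a) ≫ 𝟙 _ = e.inv.1.app a ≫ s.1.app a
    rw [Category.comp_id, ← e2a, ← Category.assoc, hai, Category.id_comp]

end EvAux3

section EvAux4

variable {C : Type u₁} {D : Type u₂} [Category.{v₁} C] [Category.{v₂} D]

/-- Extensionality for morphisms in a product category. -/
lemma EvAux.phext {X Y : C × D} {f g : X ⟶ Y} (h1 : f.1 = g.1) (h2 : f.2 = g.2) : f = g :=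
  Prod.ext h1 h2

/-- The first component of a pullback square in a product category is a pullback. -/
lemma EvAux.prodFst {W X Y Z : C × D} {fst : W ⟶ X} {snd : W ⟶ Y} {f : X ⟶ Z} {g : Y ⟶ Z}
    (h : IsPullback fst snd f g) : IsPullback fst.1 snd.1 f.1 g.1 := by
  have w1 : fst.1 ≫ f.1 = snd.1 ≫ g.1 := congrArg Prod.fst h.w
  have w2 : fst.2 ≫ f.2 = snd.2 ≫ g.2 := congrArg Prod.snd h.w
  refine IsPullback.of_isLimit' ⟨w1⟩ (PullbackCone.IsLimit.mk w1
    (fun s => (h.lift ((s.fst, fst.2) : (s.pt, W.2) ⟶ X) ((s.snd, snd.2) : (s.pt, W.2) ⟶ Y)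
      (EvAux.phext s.condition w2)).1)
    (fun s => congrArg Prod.fst (h.lift_fst _ _ _))
    (fun s => congrArg Prod.fst (h.lift_snd _ _ _))
    (fun s m hm1 hm2 => ?_))
  have e2 : (h.lift ((s.fst, fst.2) : (s.pt, W.2) ⟶ X) ((s.snd, snd.2) : (s.pt, W.2) ⟶ Y)
      (EvAux.phext s.condition w2)).1 ≫ fst.1 = s.fst :=
    congrArg Prod.fst (h.lift_fst _ _ _)
  have e3 : (h.lift ((s.fst, fst.2) : (s.pt, W.2) ⟶ X) ((s.snd, snd.2) : (s.pt, W.2) ⟶ Y)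
      (EvAux.phext s.condition w2)).1 ≫ snd.1 = s.snd :=
    congrArg Prod.fst (h.lift_snd _ _ _)
  have key := h.hom_ext (k := ((m, 𝟙 W.2) : (s.pt, W.2) ⟶ W))
    (l := ((h.lift ((s.fst, fst.2) : (s.pt, W.2) ⟶ X) ((s.snd, snd.2) : (s.pt, W.2) ⟶ Y)
      (EvAux.phext s.condition w2)).1, 𝟙 W.2))
    (EvAux.phext (hm1.trans e2.symm) rfl) (EvAux.phext (hm2.trans e3.symm) rfl)
  exact congrArg Prod.fst key

/-- The second component of a pullback square in a product category is a pullback. -/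
lemma EvAux.prodSnd {W X Y Z : C × D} {fst : W ⟶ X} {snd : W ⟶ Y} {f : X ⟶ Z} {g : Y ⟶ Z}
    (h : IsPullback fst snd f g) : IsPullback fst.2 snd.2 f.2 g.2 := by
  have w2 : fst.2 ≫ f.2 = snd.2 ≫ g.2 := congrArg Prod.snd h.w
  have w1 : fst.1 ≫ f.1 = snd.1 ≫ g.1 := congrArg Prod.fst h.w
  refine IsPullback.of_isLimit' ⟨w2⟩ (PullbackCone.IsLimit.mk w2
    (fun s => (h.lift ((fst.1, s.fst) : (W.1, s.pt) ⟶ X) ((snd.1, s.snd) : (W.1, s.pt) ⟶ Y)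
      (EvAux.phext w1 s.condition)).2)
    (fun s => congrArg Prod.snd (h.lift_fst _ _ _))
    (fun s => congrArg Prod.snd (h.lift_snd _ _ _))
    (fun s m hm1 hm2 => ?_))
  have e2 : (h.lift ((fst.1, s.fst) : (W.1, s.pt) ⟶ X) ((snd.1, s.snd) : (W.1, s.pt) ⟶ Y)
      (EvAux.phext w1 s.condition)).2 ≫ fst.2 = s.fst :=
    congrArg Prod.snd (h.lift_fst _ _ _)
  have e3 : (h.lift ((fst.1, s.fst) : (W.1, s.pt) ⟶ X) ((snd.1, s.snd) : (W.1, s.pt) ⟶ Y)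
      (EvAux.phext w1 s.condition)).2 ≫ snd.2 = s.snd :=
    congrArg Prod.snd (h.lift_snd _ _ _)
  have key := h.hom_ext (k := ((𝟙 W.1, m) : (W.1, s.pt) ⟶ W))
    (l := (𝟙 W.1, (h.lift ((fst.1, s.fst) : (W.1, s.pt) ⟶ X) ((snd.1, s.snd) : (W.1, s.pt) ⟶ Y)
      (EvAux.phext w1 s.condition)).2))
    (EvAux.phext rfl (hm1.trans e2.symm)) (EvAux.phext rfl (hm2.trans e3.symm))
  exact congrArg Prod.snd key

end EvAux4

/-- The evaluation functor `[A,B]_pb × A ⥤ B` preserves pullbacks. -/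
theorem stmt_9 (A : Type u₁) (B : Type u₂) [Category.{v₁} A] [Category.{v₂} B]
    [HasPullbacks A] [HasPullbacks B] :
    PreservesPB (evPB A B) := by
  intro W X Y Z fst snd f g h
  have hA : IsPullback fst.2 snd.2 f.2 g.2 := EvAux.prodSnd h
  have hPB : IsPullback fst.1 snd.1 f.1 g.1 := EvAux.prodFst h
  have S11 := EvAux.pointwise hPB W.2
  have top := S11.paste_horiz (f.1.2 fst.2)
  have bot := (g.1.2 snd.2).flip.paste_horiz (Z.1.preserves _ _ _ _ hA)
  exact top.paste_vert bot
end
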